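/- Let δ = k − u for integers 0 ≤ u ≤ k, and let j be an integer with 0 ≤ j ≤ k. Then ∑_{t=0}^{δ} (-1)^t · C(δ,t) · (C(k−u−t, j) + C(k−u−t, k−j)) equals 0 if j ≠ k−u and j ≠ u; equals 1 if exactly one of j = k−u, j = u holds; and equals 2 if j = k−u = u. -/

import Mathlib

lemma key_alt_sum (δ j : ℕ) :
    ∑ t ∈ Finset.range (δ + 1), (-1 : ℤ) ^ t * (δ.choose t) * ((δ - t).choose j : ℤ)
      = if j = δ then 1 else 0 := by
  by_cases hj : δ < j
  · rw [if_neg (by omega)]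
    refine Finset.sum_eq_zero fun t ht => ?_
    rw [Nat.choose_eq_zero_of_lt (show δ - t < j by omega)]
    simp
  · push_neg at hj
    have hstep : ∀ t ∈ Finset.range (δ + 1),
        (-1 : ℤ) ^ t * (δ.choose t) * ((δ - t).choose j : ℤ)
          = (δ.choose j : ℤ) * ((-1 : ℤ) ^ t * ((δ - j).choose t : ℤ)) := by
      intro t ht
      simp only [Finset.mem_range] at ht
      by_cases htj : t ≤ δ - j
      · have h1 : Nat.choose δ t * Nat.choose (δ - t) j
            = Nat.choose δ j * Nat.choose (δ - j) t := by
          have ht' : t ≤ δ := by omega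
          have := Nat.choose_mul (k := δ - t) (n := δ) (s := j) (by omega)
          rw [Nat.choose_symm ht'] at this
          have heq : δ - t - j = δ - j - t := by omega
          have heq2 : Nat.choose (δ - j) (δ - j - t) = Nat.choose (δ - j) t :=
            Nat.choose_symm (by omega)
          rw [heq, heq2] at this
          exact this
        have h1' : (δ.choose t : ℤ) * ((δ - t).choose j : ℤ)
            = (δ.choose j : ℤ) * ((δ - j).choose t : ℤ) := by exact_mod_cast h1
        rw [mul_assoc, h1']; ring
      · rw [Nat.choose_eq_zero_of_lt (show δ - t < j by omega),
            Nat.choose_eq_zero_of_lt (show δ - j < t by omega)]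
        simp
    rw [Finset.sum_congr rfl hstep, ← Finset.mul_sum]
    have hsub : ∑ t ∈ Finset.range (δ + 1), (-1 : ℤ) ^ t * ((δ - j).choose t : ℤ)
        = ∑ t ∈ Finset.range (δ - j + 1), (-1 : ℤ) ^ t * ((δ - j).choose t : ℤ) := by
      refine (Finset.sum_subset (by intro x hx; simp at hx ⊢; omega) ?_).symm
      intro x hx hx2
      simp only [Finset.mem_range] at hx hx2
      rw [Nat.choose_eq_zero_of_lt (by omega)]
      simp
    rw [hsub, Int.alternating_sum_range_choose]
    by_cases hjd : j = δ
    · subst hjd; simp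
    · rw [if_neg (by omega), if_neg hjd, mul_zero]

/-- ∑_{t=0}^{δ} (-1)^t C(δ,t) (C(k−u−t,j) + C(k−u−t,k−j)), with δ = k−u,
equals 0, 1, or 2 according to whether none, exactly one, or both of
j = k−u, j = u hold. -/
theorem stmt_2 (k u j : ℕ) (hu : u ≤ k) (hj : j ≤ k) :
    ((j ≠ k - u ∧ j ≠ u) →
      ∑ t ∈ Finset.range (k - u + 1),
        (-1 : ℤ) ^ t * ((k - u).choose t) *
          (((k - u - t).choose j : ℤ) + ((k - u - t).choose (k - j) : ℤ)) = 0) ∧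
    (((j = k - u ∧ j ≠ u) ∨ (j ≠ k - u ∧ j = u)) →
      ∑ t ∈ Finset.range (k - u + 1),
        (-1 : ℤ) ^ t * ((k - u).choose t) *
          (((k - u - t).choose j : ℤ) + ((k - u - t).choose (k - j) : ℤ)) = 1) ∧
    ((j = k - u ∧ j = u) →
      ∑ t ∈ Finset.range (k - u + 1),
        (-1 : ℤ) ^ t * ((k - u).choose t) *
          (((k - u - t).choose j : ℤ) + ((k - u - t).choose (k - j) : ℤ)) = 2) := by
  have hsplit : ∑ t ∈ Finset.range (k - u + 1),
        (-1 : ℤ) ^ t * ((k - u).choose t) *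
          (((k - u - t).choose j : ℤ) + ((k - u - t).choose (k - j) : ℤ))
      = (if j = k - u then 1 else 0) + (if k - j = k - u then 1 else 0) := by
    rw [← key_alt_sum (k - u) j, ← key_alt_sum (k - u) (k - j), ← Finset.sum_add_distrib]
    exact Finset.sum_congr rfl fun t _ => by ring
  have hiff : (k - j = k - u) ↔ j = u := by omega
  refine ⟨fun ⟨h1, h2⟩ => ?_, fun h => ?_, fun ⟨h1, h2⟩ => ?_⟩
  · rw [hsplit, if_neg h1, if_neg (by omega)]; norm_num
  · rcases h with ⟨h1, h2⟩ | ⟨h1, h2⟩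
    · rw [hsplit, if_pos h1, if_neg (by omega)]; norm_num
    · rw [hsplit, if_neg h1, if_pos (by omega)]; norm_num
  · rw [hsplit, if_pos h1, if_pos (by omega)]; norm_num
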